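/- Let E ⊆ D × S be the edge set of a connected bipartite graph between a finite set S of sources and a finite set D of destinations. Suppose there exist two distinct sources i₀ ≠ j₀, each of degree greater than 1, whose neighborhoods are disjoint. Then E contains a Σ pattern or a reversed-Σ pattern. -/

import Mathlib

/-- An X pattern in the edge set `E ⊆ D × S`: distinct sources `i₁ ≠ i₂` and distinct
destinations `j₁ ≠ j₂` with all four edges present. -/
def patternX {S D : Type*} (E : Set (D × S)) : Prop :=
  ∃ i₁ i₂ : S, ∃ j₁ j₂ : D, i₁ ≠ i₂ ∧ j₁ ≠ j₂ ∧
    (j₁, i₁) ∈ E ∧ (j₁, i₂) ∈ E ∧ (j₂, i₁) ∈ E ∧ (j₂, i₂) ∈ E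

/-- A Σ pattern in `E`: distinct sources `i₁ ≠ i₂` and pairwise distinct destinations
`j₁, j₂, j₃` with edges `(j₁,i₁), (j₂,i₁), (j₂,i₂), (j₃,i₂)`. -/
def patternSigma {S D : Type*} (E : Set (D × S)) : Prop :=
  ∃ i₁ i₂ : S, ∃ j₁ j₂ j₃ : D, i₁ ≠ i₂ ∧ j₁ ≠ j₂ ∧ j₁ ≠ j₃ ∧ j₂ ≠ j₃ ∧
    (j₁, i₁) ∈ E ∧ (j₂, i₁) ∈ E ∧ (j₂, i₂) ∈ E ∧ (j₃, i₂) ∈ E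

/-- A reversed-Σ pattern in `E`: pairwise distinct sources `i₁, i₂, i₃` and distinct
destinations `j₁ ≠ j₂` with edges `(j₁,i₁), (j₁,i₂), (j₂,i₂), (j₂,i₃)`. -/
def patternRevSigma {S D : Type*} (E : Set (D × S)) : Prop :=
  ∃ i₁ i₂ i₃ : S, ∃ j₁ j₂ : D, i₁ ≠ i₂ ∧ i₁ ≠ i₃ ∧ i₂ ≠ i₃ ∧ j₁ ≠ j₂ ∧
    (j₁, i₁) ∈ E ∧ (j₁, i₂) ∈ E ∧ (j₂, i₂) ∈ E ∧ (j₂, i₃) ∈ E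

/-- The degree of a source `i`: the number of destinations `j` with `(j, i) ∈ E`. -/
noncomputable def srcDeg {S D : Type*} (E : Set (D × S)) (i : S) : ℕ :=
  {j : D | (j, i) ∈ E}.ncard

/-- The degree of a destination `j`: the number of sources `i` with `(j, i) ∈ E`. -/
noncomputable def dstDeg {S D : Type*} (E : Set (D × S)) (j : D) : ℕ :=
  {i : S | (j, i) ∈ E}.ncard

/-- The bipartite graph on the vertex set `S ⊕ D` whose edges are given by `E ⊆ D × S`. -/
def bipartiteGraph {S D : Type*} (E : Set (D × S)) : SimpleGraph (S ⊕ D) :=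
  SimpleGraph.fromRel (fun a b => ∃ p ∈ E, a = Sum.inl p.2 ∧ b = Sum.inr p.1)

private lemma bg_adj_inl {S D : Type*} (E : Set (D × S)) (i : S) (v : S ⊕ D)
    (h : (bipartiteGraph E).Adj (Sum.inl i) v) : ∃ j, v = Sum.inr j ∧ (j, i) ∈ E := by
  cases v with
  | inl i' => simp [bipartiteGraph, SimpleGraph.fromRel_adj] at h
  | inr j =>
    refine ⟨j, rfl, ?_⟩
    simp [bipartiteGraph, SimpleGraph.fromRel_adj] at h
    exact h

private lemma bg_adj_inr {S D : Type*} (E : Set (D × S)) (j : D) (v : S ⊕ D)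
    (h : (bipartiteGraph E).Adj (Sum.inr j) v) : ∃ i, v = Sum.inl i ∧ (j, i) ∈ E := by
  cases v with
  | inr j' => simp [bipartiteGraph, SimpleGraph.fromRel_adj] at h
  | inl i =>
    refine ⟨i, rfl, ?_⟩
    simp [bipartiteGraph, SimpleGraph.fromRel_adj] at h
    exact h

private lemma bg_adj_of_mem {S D : Type*} (E : Set (D × S)) (i : S) (j : D) (h : (j, i) ∈ E) :
    (bipartiteGraph E).Adj (Sum.inl i) (Sum.inr j) := by
  simp [bipartiteGraph, SimpleGraph.fromRel_adj]
  exact h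

/-- In a connected bipartite network, if two distinct sources, each of degree greater
than 1, have disjoint neighborhoods, then `E` contains a Σ pattern or a reversed-Σ
pattern. -/
theorem stmt4 {S D : Type*} [Fintype S] [Fintype D] (E : Set (D × S))
    (hconn : (bipartiteGraph E).Connected)
    (i₀ j₀ : S) (hij : i₀ ≠ j₀)
    (hdi : 1 < srcDeg E i₀) (hdj : 1 < srcDeg E j₀)
    (hdisj : Disjoint {j : D | (j, i₀) ∈ E} {j : D | (j, j₀) ∈ E}) :
    patternSigma E ∨ patternRevSigma E := by
  classical
  left
  set G := bipartiteGraph E with hG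
  have hreach : G.Reachable (Sum.inl i₀) (Sum.inl j₀) :=
    hconn.preconnected (Sum.inl i₀) (Sum.inl j₀)
  obtain ⟨p, hp⟩ := hreach.exists_walk_length_eq_dist
  cases p with
  | nil => exact absurd rfl hij
  | cons h₁ q =>
    rename_i v
    obtain ⟨d₁, rfl, hd₁⟩ := bg_adj_inl E i₀ v h₁
    cases q with
    | cons h₂ q₂ =>
      rename_i w
      obtain ⟨s₁, rfl, hs₁d₁⟩ := bg_adj_inr E d₁ w h₂
      cases q₂ with
      | nil =>
        exact absurd hs₁d₁ (Set.disjoint_left.mp hdisj hd₁)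
      | cons h₃ q₃ =>
        rename_i x
        obtain ⟨d₂, rfl, hs₁d₂⟩ := bg_adj_inl E s₁ x h₃
        -- hp : length = dist, length = q₃.length + 3
        have hlen : q₃.length + 3 = G.dist (Sum.inl i₀) (Sum.inl j₀) := by
          simpa [SimpleGraph.Walk.length_cons, Nat.add_assoc] using hp
        have hne₁ : i₀ ≠ s₁ := by
          rintro rfl
          have := SimpleGraph.dist_le (SimpleGraph.Walk.cons h₃ q₃)
          simp [SimpleGraph.Walk.length_cons] at this
          omega
        have hd₂i₀ : (d₂, i₀) ∉ E := by
          intro hmem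
          have := SimpleGraph.dist_le (SimpleGraph.Walk.cons (show G.Adj (Sum.inl i₀) (Sum.inr d₂) from bg_adj_of_mem E i₀ d₂ hmem) q₃)
          simp [SimpleGraph.Walk.length_cons] at this
          omega
        have hd₁d₂ : d₁ ≠ d₂ := by
          rintro rfl
          have := SimpleGraph.dist_le (SimpleGraph.Walk.cons h₁ q₃)
          simp [SimpleGraph.Walk.length_cons] at this
          omega
        obtain ⟨j', hj'mem, hj'ne⟩ :=
          Set.exists_ne_of_one_lt_ncard (by simpa [srcDeg] using hdi) d₁
        have hj'E : (j', i₀) ∈ E := hj'mem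
        have hj'd₂ : j' ≠ d₂ := by
          rintro rfl
          exact hd₂i₀ hj'E
        exact ⟨i₀, s₁, j', d₁, d₂, hne₁, hj'ne, hj'd₂, hd₁d₂, hj'E, hd₁, hs₁d₁, hs₁d₂⟩
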